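/- For every integer n ≥ 2 and every real M > 0, there exists a fair-division instance with n agents (with nonnegative, additive, normalized utilities) such that MEW > M·EW(B) for every allocation B that maximizes utilitarian welfare, and MEW > 0. Consequently, the egalitarian price of fairness of maximum utilitarian welfare is infinite for every n ≥ 2. -/

import Mathlib

open Finset

/-- The bundle of goods assigned to agent `i` by allocation `f`
(an allocation maps each good to the agent receiving it). -/
def bundle {n m : ℕ} (f : Fin m → Fin n) (i : Fin n) : Finset (Fin m) :=
  Finset.univ.filter (fun g => f g = i)

/-- The (additive) utility of agent `i` for her own bundle under allocation `f`. -/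
def util {n m : ℕ} (u : Fin n → Fin m → ℝ) (f : Fin m → Fin n) (i : Fin n) : ℝ :=
  ∑ g ∈ bundle f i, u i g

/-- Egalitarian welfare: the minimum utility over all agents. -/
noncomputable def egalWelfare {n m : ℕ} (u : Fin n → Fin m → ℝ) (f : Fin m → Fin n) : ℝ :=
  ⨅ i : Fin n, util u f i

/-- Maximum egalitarian welfare of the instance, over all allocations. -/
noncomputable def maxEgalWelfare {n m : ℕ} (u : Fin n → Fin m → ℝ) : ℝ :=
  ⨆ f : Fin m → Fin n, egalWelfare u f

/-- A maximum-utilitarian-welfare allocation maximizes the sum of utilities. -/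
def IsMUW {n m : ℕ} (u : Fin n → Fin m → ℝ) (f : Fin m → Fin n) : Prop :=
  ∀ g : Fin m → Fin n, ∑ i, util u g i ≤ ∑ i, util u f i

/-! ### Auxiliary lemmas -/

/-- The utilitarian welfare of an allocation equals the sum over goods of the
value the receiving agent assigns to the good. -/
lemma welfare_eq {n m : ℕ} (u : Fin n → Fin m → ℝ) (f : Fin m → Fin n) :
    ∑ i, util u f i = ∑ g, u (f g) g := by
  unfold util bundle
  rw [← Finset.sum_fiberwise_of_maps_to (fun g _ => Finset.mem_univ (f g))]
  refine Finset.sum_congr rfl fun i _ => Finset.sum_congr rfl fun g hg => ?_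
  simp only [Finset.mem_filter] at hg
  rw [hg.2]

/-- In a MUW allocation, every good goes to an agent who values it maximally. -/
lemma muw_pointwise {n m : ℕ} (u : Fin n → Fin m → ℝ) (B : Fin m → Fin n)
    (hB : IsMUW u B) (g : Fin m) (j : Fin n) : u j g ≤ u (B g) g := by
  have h := hB (Function.update B g j)
  rw [welfare_eq, welfare_eq] at h
  have e1 : ∑ g', u (Function.update B g j g') g'
      = u j g + ∑ g' ∈ Finset.univ.erase g, u (B g') g' := by
    rw [← Finset.add_sum_erase _ _ (Finset.mem_univ g), Function.update_self]
    congr 1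
    exact Finset.sum_congr rfl fun x hx => by
      rw [Function.update_of_ne (Finset.ne_of_mem_erase hx)]
  have e2 : ∑ g', u (B g') g' = u (B g) g + ∑ g' ∈ Finset.univ.erase g, u (B g') g' :=
    (Finset.add_sum_erase _ _ (Finset.mem_univ g)).symm
  rw [e1, e2] at h
  linarith

/-! ### The counterexample instance: `n` agents, `n+1` goods -/

/-- Value of good `g` for agent `i` (indices as naturals). -/
noncomputable def V (δ : ℝ) (i g : ℕ) : ℝ :=
  if i = 0 then (if g ≤ 1 then 1/2 else 0)
  else if i = 1 then (if g ≤ 1 then (1-δ)/2 else if g = 2 then δ else 0)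
  else (if g = i+1 then 1 else 0)

/-- Agent receiving good `g` in the unique MUW allocation (indices as naturals). -/
def fstarN (g : ℕ) : ℕ := if g ≤ 1 then 0 else if g = 2 then 1 else g - 1

lemma V_nonneg (δ : ℝ) (hδ0 : 0 < δ) (hδ1 : δ ≤ 1/2) (i g : ℕ) : 0 ≤ V δ i g := by
  unfold V; split_ifs <;> linarith

lemma V_strict (δ : ℝ) (hδ0 : 0 < δ) (hδ1 : δ ≤ 1/2) (i g : ℕ)
    (hi : i ≠ fstarN g) : V δ i g < V δ (fstarN g) g := by
  unfold V fstarN at *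
  split_ifs at * <;> first | linarith | omega

lemma sum_ite_range (N c : ℕ) (hc : c < N) (a : ℝ) :
    ∑ k ∈ Finset.range N, (if k = c then a else 0) = a := by
  rw [Finset.sum_ite_eq' (Finset.range N) c (fun _ => a), if_pos (Finset.mem_range.mpr hc)]

lemma V_sum (n : ℕ) (hn : 2 ≤ n) (δ : ℝ) (i : Fin n) :
    ∑ g : Fin (n+1), V δ (i:ℕ) (g:ℕ) = 1 := by
  rw [Fin.sum_univ_eq_sum_range (fun k => V δ (i:ℕ) k) (n+1)]
  have hi := i.isLt
  rcases Nat.lt_or_ge (i:ℕ) 2 with h2 | h2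
  · interval_cases h : (i:ℕ)
    · have : ∀ k, V δ 0 k = (if k = 0 then (1/2:ℝ) else 0) + (if k = 1 then (1/2:ℝ) else 0) := by
        intro k; unfold V
        split_ifs <;> first | contradiction | (exfalso; omega) | ring1 | norm_num
      simp only [this, Finset.sum_add_distrib,
        sum_ite_range (n+1) 0 (by omega), sum_ite_range (n+1) 1 (by omega)]
      norm_num
    · have : ∀ k, V δ 1 k = (if k = 0 then (1-δ)/2 else 0) + (if k = 1 then (1-δ)/2 else 0)
          + (if k = 2 then δ else 0) := by
        intro k; unfold V
        split_ifs <;> first | contradiction | (exfalso; omega) | ring1 | norm_num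
      simp only [this, Finset.sum_add_distrib, sum_ite_range (n+1) 0 (by omega),
        sum_ite_range (n+1) 1 (by omega), sum_ite_range (n+1) 2 (by omega)]
      ring
  · have : ∀ k, V δ (i:ℕ) k = (if k = (i:ℕ)+1 then (1:ℝ) else 0) := by
      intro k; unfold V
      split_ifs <;> first | contradiction | (exfalso; omega) | ring1 | norm_num
    simp only [this, sum_ite_range (n+1) ((i:ℕ)+1) (by omega)]

/-- The (unique) MUW allocation, as a `Fin` allocation. -/
def FS (n : ℕ) (hn : 2 ≤ n) : Fin (n+1) → Fin n :=
  fun g => ⟨fstarN (g:ℕ), by have := g.isLt; unfold fstarN; split_ifs <;> omega⟩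

/-- The fair allocation. -/
def AF (n : ℕ) (hn : 2 ≤ n) : Fin (n+1) → Fin n :=
  fun g => if (g:ℕ) = 0 then ⟨0, by omega⟩
    else if (g:ℕ) ≤ 2 then ⟨1, by omega⟩
    else ⟨(g:ℕ)-1, by have := g.isLt; omega⟩

lemma FS_val (n : ℕ) (hn : 2 ≤ n) (g : Fin (n+1)) : ((FS n hn g) : ℕ) = fstarN (g:ℕ) := rfl

lemma AF_val (n : ℕ) (hn : 2 ≤ n) (g : Fin (n+1)) :
    ((AF n hn g) : ℕ) = if (g:ℕ) = 0 then 0 else if (g:ℕ) ≤ 2 then 1 else (g:ℕ)-1 := by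
  unfold AF; split_ifs <;> rfl

/-- Utility of agent 1 under the MUW allocation is exactly δ. -/
lemma util_FS_one (n : ℕ) (hn : 2 ≤ n) (δ : ℝ) :
    util (fun i g => V δ (i:ℕ) (g:ℕ)) (FS n hn) ⟨1, by omega⟩ = δ := by
  have hb : bundle (FS n hn) ⟨1, by omega⟩ = {(⟨2, by omega⟩ : Fin (n+1))} := by
    ext g
    simp only [bundle, Finset.mem_filter, Finset.mem_univ, true_and, Finset.mem_singleton]
    rw [Fin.ext_iff, Fin.ext_iff]
    show fstarN (g:ℕ) = 1 ↔ (g:ℕ) = 2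
    have := g.isLt
    unfold fstarN
    split_ifs <;> (try simp only [false_iff, true_iff]) <;> omega
  rw [util, hb, Finset.sum_singleton]
  simp only [Fin.val_mk]
  unfold V
  rw [if_neg (by omega), if_pos rfl, if_neg (by omega), if_pos rfl]

/-- Every agent gets at least 1/2 under the fair allocation. -/
lemma util_AF_ge (n : ℕ) (hn : 2 ≤ n) (δ : ℝ) (hδ0 : 0 < δ) (hδ1 : δ ≤ 1/2) (i : Fin n) :
    1/2 ≤ util (fun i g => V δ (i:ℕ) (g:ℕ)) (AF n hn) i := by
  have hnn : ∀ g ∈ bundle (AF n hn) i, (0:ℝ) ≤ V δ (i:ℕ) (g:ℕ) :=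
    fun g _ => V_nonneg δ hδ0 hδ1 _ _
  have hi := i.isLt
  have hmem : ∀ (c : ℕ) (hc : c < n+1), (if c = 0 then 0 else if c ≤ 2 then 1 else c-1) = (i:ℕ)
      → (⟨c, hc⟩ : Fin (n+1)) ∈ bundle (AF n hn) i := by
    intro c hc h
    simp only [bundle, Finset.mem_filter, Finset.mem_univ, true_and, Fin.ext_iff,
      AF_val, Fin.val_mk]
    exact h
  rw [util]
  rcases Nat.lt_or_ge (i:ℕ) 2 with h2 | h2
  · rcases Nat.lt_or_ge (i:ℕ) 1 with h1 | h1
    · -- agent 0 owns good 0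
      have h0 : (i:ℕ) = 0 := by omega
      have hm := hmem 0 (by omega) (by rw [if_pos rfl]; omega)
      refine le_trans ?_ (Finset.single_le_sum hnn hm)
      simp only [Fin.val_mk]
      unfold V
      rw [if_pos h0, if_pos (by omega)]
    · -- agent 1 owns goods 1 and 2
      have h1' : (i:ℕ) = 1 := by omega
      have hm1 := hmem 1 (by omega) (by rw [if_neg (by omega), if_pos (by omega)]; omega)
      have hm2 := hmem 2 (by omega) (by rw [if_neg (by omega), if_pos (by omega)]; omega)
      have hsub : ({⟨1, by omega⟩, ⟨2, by omega⟩} : Finset (Fin (n+1)))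
          ⊆ bundle (AF n hn) i := by
        intro g hg
        rcases Finset.mem_insert.mp hg with h' | h'
        · subst h'; exact hm1
        · rw [Finset.mem_singleton.mp h']; exact hm2
      refine le_trans ?_ (Finset.sum_le_sum_of_subset_of_nonneg hsub
        (fun g _ _ => V_nonneg δ hδ0 hδ1 _ _))
      rw [Finset.sum_pair (by simp [Fin.ext_iff])]
      simp only [Fin.val_mk]
      unfold V
      rw [if_neg (by omega), if_pos h1', if_pos (by omega), if_neg (by omega),
        if_pos h1', if_neg (by omega), if_pos rfl]
      linarith
  · -- agent i ≥ 2 owns good i+1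
    have hm := hmem ((i:ℕ)+1) (by omega)
      (by rw [if_neg (by omega), if_neg (by omega)]; omega)
    refine le_trans ?_ (Finset.single_le_sum hnn hm)
    simp only [Fin.val_mk]
    unfold V
    rw [if_neg (by omega), if_neg (by omega), if_pos rfl]
    norm_num

/-- For every `n ≥ 2` and `M > 0` there is an instance with `n` agents
(nonnegative, additive, normalized utilities) with `MEW > 0` and
`MEW > M · EW(B)` for every utilitarian-welfare-maximizing allocation `B`;
hence the egalitarian price of fairness of MUW is infinite. -/
theorem muw_egal_pof_infinite (n : ℕ) (hn : 2 ≤ n) (M : ℝ) (hM : 0 < M) :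
    ∃ (m : ℕ) (u : Fin n → Fin m → ℝ),
      (∀ i g, 0 ≤ u i g) ∧ (∀ i, ∑ g, u i g = 1) ∧
      0 < maxEgalWelfare u ∧
      ∀ B : Fin m → Fin n, IsMUW u B →
        M * egalWelfare u B < maxEgalWelfare u := by
  set δ : ℝ := min (1/2) (1/(4*M)) with hδdef
  have hδ0 : 0 < δ := lt_min (by norm_num) (by positivity)
  have hδ1 : δ ≤ 1/2 := min_le_left _ _
  have hδM : M * δ ≤ 1/4 := by
    have h := min_le_right (1/2 : ℝ) (1/(4*M))
    calc M * δ ≤ M * (1/(4*M)) := mul_le_mul_of_nonneg_left h hM.le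
      _ = 1/4 := by field_simp
  set u : Fin n → Fin (n+1) → ℝ := fun i g => V δ (i:ℕ) (g:ℕ) with hudef
  have hne : Nonempty (Fin n) := ⟨⟨0, by omega⟩⟩
  -- MEW ≥ 1/2
  have hMEW : (1/2 : ℝ) ≤ maxEgalWelfare u := by
    have hEW : (1/2 : ℝ) ≤ egalWelfare u (AF n hn) :=
      le_ciInf (fun i => util_AF_ge n hn δ hδ0 hδ1 i)
    have hle : egalWelfare u (AF n hn) ≤ maxEgalWelfare u :=
      le_ciSup (Set.Finite.bddAbove (Set.finite_range _)) (AF n hn)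
    linarith
  refine ⟨n+1, u, fun i g => V_nonneg δ hδ0 hδ1 _ _, fun i => V_sum n hn δ i,
    by linarith, ?_⟩
  intro B hB
  -- every MUW allocation equals FS
  have hBF : B = FS n hn := by
    funext g
    by_contra hne
    have hne' : ((B g : Fin n) : ℕ) ≠ fstarN (g:ℕ) := by
      intro h
      exact hne (Fin.ext (by rw [h, ← FS_val n hn g]))
    have h1 : u (FS n hn g) g ≤ u (B g) g := muw_pointwise u B hB g (FS n hn g)
    have h2 : V δ ((B g : Fin n) : ℕ) (g:ℕ) < V δ (fstarN (g:ℕ)) (g:ℕ) :=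
      V_strict δ hδ0 hδ1 _ _ hne'
    have h3 : u (FS n hn g) g = V δ (fstarN (g:ℕ)) (g:ℕ) := by rw [hudef]; simp [FS_val]
    rw [h3] at h1
    exact absurd h1 (not_le.mpr h2)
  -- hence EW(B) ≤ δ
  have hEWB : egalWelfare u B ≤ δ := by
    rw [hBF]
    have hle : egalWelfare u (FS n hn) ≤ util u (FS n hn) ⟨1, by omega⟩ :=
      ciInf_le (Set.Finite.bddBelow (Set.finite_range _)) _
    rw [util_FS_one n hn δ] at hle
    exact hle
  have : M * egalWelfare u B ≤ M * δ := mul_le_mul_of_nonneg_left hEWB hM.le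
  linarith
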